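/- arXiv:1604.08459 — 2 statements merged into one kernel-verified Lean document; each statement's English description precedes it below -/
import Mathlib

section
/- Let K ≥ 1 and let X_1, …, X_K, Y_1, …, Y_K be 2K mutually independent real random variables, with the X_i identically distributed and the Y_j identically distributed. Let f = (1/K²) · Σ_{1 ≤ i,j ≤ K} 1{X_i < Y_j} be the empirical comparison frequency. Then Var(f) ≤ 1/(2K). In particular, if N = 2K is the total number of evaluations, Var(f) ≤ 1/N. -/
open MeasureTheory ProbabilityTheory

/-- The empirical comparison frequency of two samples `(X i)_{i < K}` and `(Y j)_{j < K}`: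
the fraction of pairs `(i,j)` with `X i < Y j`. -/
noncomputable def compFreq {Ω : Type*} (K : ℕ) (X Y : Fin K → Ω → ℝ) (ω : Ω) : ℝ :=
  (1 / (K : ℝ) ^ 2) * ∑ i : Fin K, ∑ j : Fin K, if X i ω < Y j ω then (1 : ℝ) else 0

/-- If `X_1, …, X_K, Y_1, …, Y_K` are mutually independent, the `X_i` identically
distributed and the `Y_j` identically distributed, then the variance of the empirical
comparison frequency `f = (1/K²)·Σ_{i,j} 1{X_i < Y_j}` is at most `1/(2K)`; in particular,
with `N = 2K` the total number of evaluations, `Var(f) ≤ 1/N`. -/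
theorem variance_comparison_frequency
    {Ω : Type*} [MeasurableSpace Ω] (μ : Measure Ω) [IsProbabilityMeasure μ]
    (K : ℕ) (hK : 1 ≤ K) (X Y : Fin K → Ω → ℝ)
    (hXmeas : ∀ i, Measurable (X i)) (hYmeas : ∀ j, Measurable (Y j))
    (hindep : iIndepFun (Sum.elim X Y : Fin K ⊕ Fin K → Ω → ℝ) μ)
    (hXid : ∀ i, IdentDistrib (X i) (X ⟨0, hK⟩) μ μ)
    (hYid : ∀ j, IdentDistrib (Y j) (Y ⟨0, hK⟩) μ μ) :
    variance (compFreq K X Y) μ ≤ 1 / (2 * K) := by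
  classical
  have hKpos : (0:ℝ) < K := by exact_mod_cast hK
  -- the indicator variables, indexed by pairs
  set Z : Fin K × Fin K → Ω → ℝ :=
    fun p ω => if X p.1 ω < Y p.2 ω then (1:ℝ) else 0 with hZdef
  have hZmeas : ∀ p, Measurable (Z p) := fun p =>
    Measurable.ite (measurableSet_lt (hXmeas p.1) (hYmeas p.2)) measurable_const
      measurable_const
  have hZ0 : ∀ p ω, 0 ≤ Z p ω := by intro p ω; simp only [hZdef]; split <;> norm_num
  have hZ1 : ∀ p ω, Z p ω ≤ 1 := by intro p ω; simp only [hZdef]; split <;> norm_num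
  have hZint : ∀ p, Integrable (Z p) μ := by
    intro p
    refine (integrable_const (1:ℝ)).mono' (hZmeas p).aestronglyMeasurable ?_
    filter_upwards with ω
    rw [Real.norm_eq_abs, abs_of_nonneg (hZ0 p ω)]
    exact hZ1 p ω
  have hZZint : ∀ p q, Integrable (fun ω => Z p ω * Z q ω) μ := by
    intro p q
    refine (integrable_const (1:ℝ)).mono'
      ((hZmeas p).mul (hZmeas q)).aestronglyMeasurable ?_
    filter_upwards with ω
    rw [Real.norm_eq_abs, abs_of_nonneg (mul_nonneg (hZ0 p ω) (hZ0 q ω))]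
    exact mul_le_one₀ (hZ1 p ω) (hZ0 q ω) (hZ1 q ω)
  set m : Fin K × Fin K → ℝ := fun p => ∫ ω, Z p ω ∂μ with hmdef
  have hm0 : ∀ p, 0 ≤ m p := fun p => integral_nonneg (hZ0 p)
  have hm1 : ∀ p, m p ≤ 1 := by
    intro p
    calc m p ≤ ∫ _, (1:ℝ) ∂μ := integral_mono (hZint p) (integrable_const 1) (hZ1 p)
    _ = 1 := by simp
  -- f as a sum over pairs
  have hf : compFreq K X Y = fun ω => (1 / (K:ℝ)^2) * ∑ p : Fin K × Fin K, Z p ω := by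
    funext ω
    rw [compFreq, Fintype.sum_prod_type]
  -- expectation of f
  have hEZ : ∫ ω, ∑ p : Fin K × Fin K, Z p ω ∂μ = ∑ p : Fin K × Fin K, m p :=
    integral_finset_sum _ (fun p _ => hZint p)
  have hEf : ∫ ω, compFreq K X Y ω ∂μ = (1 / (K:ℝ)^2) * ∑ p : Fin K × Fin K, m p := by
    rw [hf, integral_const_mul, hEZ]
  -- f is in L²
  have hfmeas : Measurable (compFreq K X Y) := by
    rw [hf]
    exact measurable_const.mul (Finset.measurable_sum _ (fun p _ => hZmeas p))
  have hfL2 : MemLp (compFreq K X Y) 2 μ := by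
    refine MemLp.mono_exponent ?_ (le_top)
    refine memLp_top_of_bound hfmeas.aestronglyMeasurable ((1 / (K:ℝ)^2) * K^2) ?_
    filter_upwards with ω
    rw [hf]
    rw [Real.norm_eq_abs, abs_mul, abs_of_nonneg (by positivity : (0:ℝ) ≤ 1 / (K:ℝ)^2)]
    refine mul_le_mul_of_nonneg_left ?_ (by positivity)
    calc |∑ p : Fin K × Fin K, Z p ω| ≤ ∑ p : Fin K × Fin K, |Z p ω| :=
          Finset.abs_sum_le_sum_abs _ _
    _ ≤ ∑ _p : Fin K × Fin K, (1:ℝ) := by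
          refine Finset.sum_le_sum fun p _ => ?_
          rw [abs_of_nonneg (hZ0 p ω)]; exact hZ1 p ω
    _ = (K:ℝ)^2 := by simp [sq]
  -- the centered variables
  set W : Fin K × Fin K → Ω → ℝ := fun p ω => Z p ω - m p with hWdef
  have hWint : ∀ p, Integrable (W p) μ := fun p => (hZint p).sub (integrable_const _)
  have hWWint : ∀ p q, Integrable (fun ω => W p ω * W q ω) μ := by
    intro p q
    have : (fun ω => W p ω * W q ω) =
        fun ω => Z p ω * Z q ω - m p * Z q ω - Z p ω * m q + m p * m q := by
      funext ω; simp only [hWdef]; ring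
    rw [this]
    exact (((hZZint p q).sub ((hZint q).const_mul _)).sub ((hZint p).mul_const _)).add
      (integrable_const _)
  -- covariance identity
  have hcov : ∀ p q, ∫ ω, W p ω * W q ω ∂μ = (∫ ω, Z p ω * Z q ω ∂μ) - m p * m q := by
    intro p q
    have h1 : (fun ω => W p ω * W q ω) =
        fun ω => Z p ω * Z q ω - m p * Z q ω - Z p ω * m q + m p * m q := by
      funext ω; simp only [hWdef]; ring
    have I1 := hZZint p q
    have I2 : Integrable (fun ω => m p * Z q ω) μ := (hZint q).const_mul _
    have I3 : Integrable (fun ω => Z p ω * m q) μ := (hZint p).mul_const _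
    have I12 : Integrable (fun ω => Z p ω * Z q ω - m p * Z q ω) μ := I1.sub I2
    have I123 : Integrable (fun ω => Z p ω * Z q ω - m p * Z q ω - Z p ω * m q) μ := I12.sub I3
    rw [h1, integral_add I123 (integrable_const _), integral_sub I12 I3, integral_sub I1 I2,
      integral_const_mul, integral_mul_const, integral_const]
    simp only [probReal_univ, ENNReal.toReal_one, one_smul, ← hmdef]
    ring
  -- the covariance vanishes for disjoint pairs
  have hcov_zero : ∀ p q : Fin K × Fin K, p.1 ≠ q.1 → p.2 ≠ q.2 →
      ∫ ω, W p ω * W q ω ∂μ = 0 := by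
    intro p q h1 h2
    have hmeas' : ∀ i : Fin K ⊕ Fin K, Measurable (Sum.elim X Y i) := by
      intro i; cases i with
      | inl i => exact hXmeas i
      | inr j => exact hYmeas j
    have hpair := hindep.indepFun_prodMk_prodMk hmeas'
      (Sum.inl p.1) (Sum.inr p.2) (Sum.inl q.1) (Sum.inr q.2)
      (by simp [h1]) (by simp) (by simp) (by simp [h2])
    have hφ : Measurable (fun v : ℝ × ℝ => if v.1 < v.2 then (1:ℝ) else 0) :=
      Measurable.ite (measurableSet_lt measurable_fst measurable_snd) measurable_const
        measurable_const
    have hZindep : IndepFun (Z p) (Z q) μ := hpair.comp hφ hφ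
    have h3 : ∫ ω, Z p ω * Z q ω ∂μ = m p * m q :=
      hZindep.integral_mul_eq_mul_integral (hZint p).1 (hZint q).1
    rw [hcov p q, h3, sub_self]
  -- general bound on the covariance
  have hcov_le : ∀ p q : Fin K × Fin K,
      ∫ ω, W p ω * W q ω ∂μ ≤
        (if p.1 = q.1 then (1:ℝ)/4 else 0) + (if p.2 = q.2 then (1:ℝ)/4 else 0) := by
    intro p q
    by_cases h1 : p.1 = q.1
    case neg =>
      by_cases h2 : p.2 = q.2
      case neg =>
        rw [hcov_zero p q h1 h2]
        simp [h1, h2]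
      case pos =>
        -- overlap case below (shared)
        rw [hcov p q]
        have hb : (∫ ω, Z p ω * Z q ω ∂μ) - m p * m q ≤ 1/4 := by
          have he0 : 0 ≤ ∫ ω, Z p ω * Z q ω ∂μ :=
            integral_nonneg fun ω => mul_nonneg (hZ0 p ω) (hZ0 q ω)
          have hep : ∫ ω, Z p ω * Z q ω ∂μ ≤ m p := by
            refine integral_mono (hZZint p q) (hZint p) fun ω => ?_
            exact mul_le_of_le_one_right (hZ0 p ω) (hZ1 q ω)
          have heq : ∫ ω, Z p ω * Z q ω ∂μ ≤ m q := by
            refine integral_mono (hZZint p q) (hZint q) fun ω => ?_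
            exact mul_le_of_le_one_left (hZ0 q ω) (hZ1 p ω)
          set e := ∫ ω, Z p ω * Z q ω ∂μ
          nlinarith [mul_nonneg he0 (sub_nonneg.2 hep), mul_nonneg he0 (sub_nonneg.2 heq),
            sq_nonneg (2*e - 1), mul_nonneg (sub_nonneg.2 hep) (sub_nonneg.2 heq)]
        calc (∫ ω, Z p ω * Z q ω ∂μ) - m p * m q ≤ 1/4 := hb
        _ ≤ _ := by simp [h1, h2]
    case pos =>
      rw [hcov p q]
      have hb : (∫ ω, Z p ω * Z q ω ∂μ) - m p * m q ≤ 1/4 := by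
        have he0 : 0 ≤ ∫ ω, Z p ω * Z q ω ∂μ :=
          integral_nonneg fun ω => mul_nonneg (hZ0 p ω) (hZ0 q ω)
        have hep : ∫ ω, Z p ω * Z q ω ∂μ ≤ m p := by
          refine integral_mono (hZZint p q) (hZint p) fun ω => ?_
          exact mul_le_of_le_one_right (hZ0 p ω) (hZ1 q ω)
        have heq : ∫ ω, Z p ω * Z q ω ∂μ ≤ m q := by
          refine integral_mono (hZZint p q) (hZint q) fun ω => ?_
          exact mul_le_of_le_one_left (hZ0 q ω) (hZ1 p ω)
        set e := ∫ ω, Z p ω * Z q ω ∂μ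
        nlinarith [mul_nonneg he0 (sub_nonneg.2 hep), mul_nonneg he0 (sub_nonneg.2 heq),
          sq_nonneg (2*e - 1), mul_nonneg (sub_nonneg.2 hep) (sub_nonneg.2 heq)]
      calc (∫ ω, Z p ω * Z q ω ∂μ) - m p * m q ≤ 1/4 := hb
      _ ≤ _ := by by_cases h2 : p.2 = q.2 <;> simp [h1, h2]
  -- variance expansion
  have hvar : variance (compFreq K X Y) μ =
      (1 / (K:ℝ)^2)^2 * ∑ p : Fin K × Fin K, ∑ q : Fin K × Fin K, ∫ ω, W p ω * W q ω ∂μ := by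
    rw [variance_eq_integral hfmeas.aemeasurable]
    change μ[((compFreq K X Y - fun _ => ∫ ω, compFreq K X Y ω ∂μ) ^ (2:ℕ) : Ω → ℝ)] = _
    have hsq : ((compFreq K X Y - fun _ => ∫ ω, compFreq K X Y ω ∂μ) ^ (2:ℕ)) =
        fun ω => (1 / (K:ℝ)^2)^2 *
          ∑ p : Fin K × Fin K, ∑ q : Fin K × Fin K, W p ω * W q ω := by
      funext ω
      have hgw : compFreq K X Y ω - (∫ ω, compFreq K X Y ω ∂μ) =
          (1 / (K:ℝ)^2) * ∑ p : Fin K × Fin K, W p ω := by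
        rw [hEf, hf]
        simp only [hWdef]
        rw [Finset.sum_sub_distrib]
        ring
      simp only [Pi.pow_apply, Pi.sub_apply]
      rw [hgw, mul_pow]
      congr 1
      rw [pow_two, Finset.sum_mul_sum]
    rw [hsq, integral_const_mul]
    congr 1
    rw [integral_finset_sum _ (fun p _ => integrable_finset_sum _ (fun q _ => hWWint p q))]
    exact Finset.sum_congr rfl fun p _ =>
      integral_finset_sum _ (fun q _ => hWWint p q)
  rw [hvar]
  -- bound the double sum
  have hsum : ∑ p : Fin K × Fin K, ∑ q : Fin K × Fin K, ∫ ω, W p ω * W q ω ∂μ ≤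
      (K:ℝ)^3 / 2 := by
    calc ∑ p : Fin K × Fin K, ∑ q : Fin K × Fin K, ∫ ω, W p ω * W q ω ∂μ
        ≤ ∑ p : Fin K × Fin K, ∑ q : Fin K × Fin K,
            ((if p.1 = q.1 then (1:ℝ)/4 else 0) + (if p.2 = q.2 then (1:ℝ)/4 else 0)) := by
          refine Finset.sum_le_sum fun p _ => Finset.sum_le_sum fun q _ => hcov_le p q
    _ = (K:ℝ)^3 / 2 := by
          have h1 : ∀ p : Fin K × Fin K,
              ∑ q : Fin K × Fin K,
                ((if p.1 = q.1 then (1:ℝ)/4 else 0) + (if p.2 = q.2 then (1:ℝ)/4 else 0))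
              = (K:ℝ)/4 + (K:ℝ)/4 := by
            intro p
            rw [Finset.sum_add_distrib, Fintype.sum_prod_type, Fintype.sum_prod_type]
            norm_num [Finset.sum_ite_eq, Finset.sum_comm]
            ring
          rw [Finset.sum_congr rfl (fun p _ => h1 p)]
          simp only [Finset.sum_const, Finset.card_univ, Fintype.card_prod, Fintype.card_fin,
            nsmul_eq_mul, Nat.cast_mul]
          ring
  have hKne : (K:ℝ) ≠ 0 := ne_of_gt hKpos
  calc (1 / (K:ℝ)^2)^2 * ∑ p : Fin K × Fin K, ∑ q : Fin K × Fin K, ∫ ω, W p ω * W q ω ∂μ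
      ≤ (1 / (K:ℝ)^2)^2 * ((K:ℝ)^3 / 2) :=
        mul_le_mul_of_nonneg_left hsum (by positivity)
  _ = 1 / (2*(K:ℝ)) := by field_simp
end

section
/- There exists a universal constant C > 0 with the following property (simple regret of the COPS1 algorithm). Let x* ∈ [−1,1], let K ≥ 1, and let G_1, …, G_K, G'_1, …, G'_K be 2K independent standard Gaussian random variables. Set f = (1/K²) · Σ_{1 ≤ i,j ≤ K} 1{(1 − x*)² + G_i < (−1 − x*)² + G'_j}, and define the estimator x̂ = max(−1, min(1, h(f)/√8)), where h is the clamped inverse of Φ on [−√8, √8] (h(x) = Φ⁻¹(x) for x ∈ [Φ(−√8), Φ(√8)], constant equal to ∓√8 outside). Then the simple regret after N = 2K evaluations of the noisy sphere F_noisy(x) = (x − x*)² + N(0,1) satisfies E[(x̂ − x*)²] ≤ C/N. -/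
open MeasureTheory ProbabilityTheory Real NNReal ENNReal

universe u

/-- The cumulative distribution function of the standard Gaussian distribution `N(0,1)`. -/
noncomputable def stdGaussCDF : ℝ → ℝ := fun t => ProbabilityTheory.cdf (gaussianReal 0 1) t

/-- `h` is the clamped inverse of the standard Gaussian CDF `Φ` on `[−c, c]`. -/
def IsClampedGaussInv (c : ℝ) (h : ℝ → ℝ) : Prop :=
  (∀ t ∈ Set.Icc (-c) c, h (stdGaussCDF t) = t) ∧
  (∀ x, x < stdGaussCDF (-c) → h x = -c) ∧
  (∀ x, stdGaussCDF c < x → h x = c)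

noncomputable abbrev phi : ℝ → ℝ := gaussianPDFReal 0 1

lemma stdGaussCDF_eq_integral (t : ℝ) :
    stdGaussCDF t = ∫ u in Set.Iic t, phi u := by
  rw [stdGaussCDF, cdf_eq_real, measureReal_def, gaussianReal_apply_eq_integral 0 one_ne_zero,
    ENNReal.toReal_ofReal]
  exact setIntegral_nonneg measurableSet_Iic fun x _ => gaussianPDFReal_nonneg 0 1 x

lemma integrableOn_phi (s : Set ℝ) : IntegrableOn phi s := by
  exact (integrable_gaussianPDFReal 0 1).integrableOn

lemma stdGaussCDF_sub {a b : ℝ} (hab : a ≤ b) :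
    stdGaussCDF b - stdGaussCDF a = ∫ u in Set.Ioc a b, phi u := by
  rw [stdGaussCDF_eq_integral, stdGaussCDF_eq_integral, ← Set.Iic_union_Ioc_eq_Iic hab,
    setIntegral_union (Set.Iic_disjoint_Ioc le_rfl) measurableSet_Ioc
      (integrableOn_phi _) (integrableOn_phi _)]
  ring

lemma phi_anti {u d : ℝ} (h : |u| ≤ |d|) : phi d ≤ phi u := by
  unfold phi gaussianPDFReal
  simp only [sub_zero]
  have h2 : u ^ 2 ≤ d ^ 2 := by
    rw [← sq_abs u, ← sq_abs d]; exact pow_le_pow_left₀ (abs_nonneg u) h 2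
  have : Real.exp (-d ^ 2 / (2 * 1)) ≤ Real.exp (-u ^ 2 / (2 * 1)) := by
    apply Real.exp_le_exp.2; nlinarith
  have hc : (0:ℝ) ≤ (Real.sqrt (2 * Real.pi * 1))⁻¹ := by positivity
  calc (Real.sqrt (2 * Real.pi * 1))⁻¹ * Real.exp (-(d : ℝ) ^ 2 / (2 * 1))
      ≤ (Real.sqrt (2 * Real.pi * 1))⁻¹ * Real.exp (-u ^ 2 / (2 * 1)) :=
        mul_le_mul_of_nonneg_left this hc
    _ = _ := by norm_num

lemma phi_pos (u : ℝ) : 0 < phi u := gaussianPDFReal_pos 0 1 u one_ne_zero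

lemma stdGaussCDF_sub_ge {a b d : ℝ} (hab : a ≤ b) (ha : -d ≤ a) (hb : b ≤ d) :
    (b - a) * phi d ≤ stdGaussCDF b - stdGaussCDF a := by
  rw [stdGaussCDF_sub hab]
  have hd : 0 ≤ d := by linarith
  have : (b - a) * phi d = ∫ _ in Set.Ioc a b, phi d := by
    rw [setIntegral_const]; simp [Real.volume_Ioc, ENNReal.toReal_ofReal (sub_nonneg.2 hab), hab]
  rw [this]
  refine setIntegral_mono_on (integrableOn_const (by simp [Real.volume_Ioc]))
    (integrableOn_phi _) measurableSet_Ioc fun u hu => ?_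
  refine phi_anti ?_
  rw [abs_of_nonneg hd]
  exact abs_le.2 ⟨by linarith [hu.1], le_trans hu.2 hb⟩

lemma stdGaussCDF_mono : Monotone stdGaussCDF := fun a b hab => by
  set d := max |a| |b| with hd
  have h1 : -d ≤ a := by
    have h := le_max_left |a| |b|
    have := neg_abs_le a
    linarith
  have h2 : b ≤ d := le_trans (le_abs_self b) (le_max_right _ _)
  nlinarith [stdGaussCDF_sub_ge hab h1 h2, phi_pos d, sub_nonneg.2 hab]

lemma stdGaussCDF_lipschitz {a b : ℝ} (hab : a ≤ b) :
    stdGaussCDF b - stdGaussCDF a ≤ (b - a) * phi 0 := by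
  rw [stdGaussCDF_sub hab]
  have : (b - a) * phi 0 = ∫ _ in Set.Ioc a b, phi 0 := by
    rw [setIntegral_const]; simp [Real.volume_Ioc, ENNReal.toReal_ofReal (sub_nonneg.2 hab), hab]
  rw [this]
  refine setIntegral_mono_on (integrableOn_phi _)
    (integrableOn_const (by simp [Real.volume_Ioc])) measurableSet_Ioc fun u hu => ?_
  exact phi_anti (by simp)

lemma stdGaussCDF_continuous : Continuous stdGaussCDF := by
  have : LipschitzWith (Real.toNNReal (phi 0)) stdGaussCDF := by
    apply LipschitzWith.of_dist_le_mul
    intro x y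
    rcases le_total x y with h | h
    · rw [Real.dist_eq, Real.dist_eq, abs_of_nonpos (by
        have := stdGaussCDF_mono h; linarith), abs_of_nonpos (by linarith)]
      have := stdGaussCDF_lipschitz h
      rw [Real.coe_toNNReal _ (le_of_lt (phi_pos 0))]
      nlinarith [phi_pos 0]
    · rw [Real.dist_eq, Real.dist_eq, abs_of_nonneg (by
        have := stdGaussCDF_mono h; linarith), abs_of_nonneg (by linarith)]
      have := stdGaussCDF_lipschitz h
      rw [Real.coe_toNNReal _ (le_of_lt (phi_pos 0))]
      nlinarith [phi_pos 0]
  exact this.continuous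

lemma abs_sub_le_of_icc {c t s : ℝ} (ht : t ∈ Set.Icc (-c) c) (hs : s ∈ Set.Icc (-c) c) :
    |t - s| * phi c ≤ |stdGaussCDF t - stdGaussCDF s| := by
  rcases le_total t s with h | h
  · rw [abs_of_nonpos (by linarith), abs_of_nonpos (by
      have := stdGaussCDF_mono h; linarith)]
    have := stdGaussCDF_sub_ge h ht.1 hs.2
    nlinarith
  · rw [abs_of_nonneg (by linarith), abs_of_nonneg (by
      have := stdGaussCDF_mono h; linarith)]
    have := stdGaussCDF_sub_ge h hs.1 ht.2
    nlinarith

lemma clamped_inv_lip {c : ℝ} (hc : 0 < c) {h : ℝ → ℝ} (hinv : IsClampedGaussInv c h)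
    {s : ℝ} (hs : s ∈ Set.Icc (-c) c) (x : ℝ) :
    |h x - s| ≤ (phi c)⁻¹ * |x - stdGaussCDF s| := by
  obtain ⟨hmid, hlo, hhi⟩ := hinv
  have hphi := phi_pos c
  rcases lt_or_ge x (stdGaussCDF (-c)) with hx | hx1
  · rw [hlo x hx]
    have h1 : stdGaussCDF (-c) ≤ stdGaussCDF s := stdGaussCDF_mono hs.1
    rw [abs_of_nonpos (by linarith [hs.1]), abs_of_nonpos (by linarith)]
    have h2 := stdGaussCDF_sub_ge hs.1 (le_refl (-c)) hs.2
    rw [le_inv_mul_iff₀ hphi]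
    nlinarith
  rcases lt_or_ge (stdGaussCDF c) x with hx | hx2
  · rw [hhi x hx]
    have h1 : stdGaussCDF s ≤ stdGaussCDF c := stdGaussCDF_mono hs.2
    rw [abs_of_nonneg (by linarith [hs.2]), abs_of_nonneg (by linarith)]
    have h2 := stdGaussCDF_sub_ge hs.2 hs.1 (le_refl c)
    rw [le_inv_mul_iff₀ hphi]
    nlinarith
  · obtain ⟨t, ht, hxt⟩ := intermediate_value_Icc (by linarith : -c ≤ c)
      stdGaussCDF_continuous.continuousOn (Set.mem_Icc.2 ⟨hx1, hx2⟩)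
    rw [← hxt, hmid t ht]
    have := abs_sub_le_of_icc ht hs
    rw [le_inv_mul_iff₀ hphi]
    linarith

lemma continuous_phi : Continuous phi := by
  unfold phi gaussianPDFReal; fun_prop

lemma measurable_stdGaussCDF : Measurable stdGaussCDF := stdGaussCDF_mono.measurable

lemma stdGaussCDF_nonneg (t : ℝ) : 0 ≤ stdGaussCDF t := cdf_nonneg _ t
lemma stdGaussCDF_le_one (t : ℝ) : stdGaussCDF t ≤ 1 := cdf_le_one _ t

lemma stdGaussCDF_eq_intInt (t : ℝ) :
    stdGaussCDF t = stdGaussCDF 0 + ∫ u in (0:ℝ)..t, phi u := by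
  rcases le_total 0 t with h | h
  · rw [intervalIntegral.integral_of_le h, ← stdGaussCDF_sub h]; ring
  · rw [intervalIntegral.integral_of_ge h, ← stdGaussCDF_sub h]; ring

lemma hasDerivAt_stdGaussCDF (t : ℝ) : HasDerivAt stdGaussCDF (phi t) t := by
  have h1 : HasDerivAt (fun u => ∫ x in (0:ℝ)..u, phi x) (phi t) t :=
    intervalIntegral.integral_hasDerivAt_right
      ((integrableOn_phi _).intervalIntegrable)
      continuous_phi.aestronglyMeasurable.stronglyMeasurableAtFilter
      continuous_phi.continuousAt
  have h2 : HasDerivAt (fun u => stdGaussCDF 0 + ∫ x in (0:ℝ)..u, phi x) (phi t) t :=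
    h1.const_add _
  exact h2.congr_of_eventuallyEq (Filter.Eventually.of_forall fun u => stdGaussCDF_eq_intInt u)

lemma integral_nu (g : ℝ → ℝ) :
    ∫ x, g x ∂(gaussianReal 0 1) = ∫ x, phi x * g x := by
  rw [show gaussianReal 0 1 = volume.withDensity (fun x => ((phi x).toNNReal : ℝ≥0∞)) from
    gaussianReal_of_var_ne_zero 0 one_ne_zero,
    integral_withDensity_eq_integral_smul (continuous_phi.measurable.real_toNNReal) g]
  congr 1; ext x
  rw [NNReal.smul_def, Real.coe_toNNReal _ (phi_pos x).le, smul_eq_mul]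

lemma nu_noatoms (a : ℝ) : gaussianReal 0 1 {a} = 0 :=
  gaussianReal_absolutelyContinuous 0 one_ne_zero (measure_singleton a)

lemma nu_map_neg : Measure.map (fun x : ℝ => -x) (gaussianReal 0 1) = gaussianReal 0 1 := by
  have h := gaussianReal_map_const_mul (μ := 0) (v := 1) (-1)
  have h1 : (NNReal.mk ((-1:ℝ)^2) (sq_nonneg _)) * 1 = 1 := by ext; norm_num
  rw [h1, mul_zero] at h
  rw [← h]
  congr 1; ext x; ring

lemma stdGaussCDF_neg (x : ℝ) : stdGaussCDF (-x) = 1 - stdGaussCDF x := by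
  have h1 : gaussianReal 0 1 (Set.Iic (-x)) = gaussianReal 0 1 (Set.Ici x) := by
    conv_lhs => rw [← nu_map_neg]
    rw [Measure.map_apply (by fun_prop) measurableSet_Iic]
    congr 1; ext y; simp
  have h2 : gaussianReal 0 1 (Set.Ici x) = 1 - gaussianReal 0 1 (Set.Iio x) := by
    rw [← Set.compl_Iio, measure_compl measurableSet_Iio (measure_ne_top _ _)]
    simp
  have h3 : gaussianReal 0 1 (Set.Iio x) = gaussianReal 0 1 (Set.Iic x) :=
    measure_congr (Iio_ae_eq_Iic' (nu_noatoms x))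
  unfold stdGaussCDF
  rw [cdf_eq_real, cdf_eq_real, measureReal_def, measureReal_def, h1, h2, h3]
  rw [ENNReal.toReal_sub_of_le prob_le_one (by norm_num)]
  simp

lemma integrable_cdf_comp {Ω : Type*} {m : MeasurableSpace Ω} (μ' : Measure Ω)
    [IsProbabilityMeasure μ'] (g : Ω → ℝ) (hg : Measurable g) :
    Integrable (fun x => stdGaussCDF (g x)) μ' := by
  refine Integrable.mono' (integrable_const 1)
    (measurable_stdGaussCDF.comp hg).aestronglyMeasurable
    (Filter.Eventually.of_forall fun x => ?_)
  rw [Real.norm_eq_abs, abs_le]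
  exact ⟨by linarith [stdGaussCDF_nonneg (g x)], stdGaussCDF_le_one (g x)⟩

lemma F_zero : ∫ x, stdGaussCDF (0 + x) ∂(gaussianReal 0 1) = 1/2 := by
  simp only [zero_add]
  have h1 : ∫ x, stdGaussCDF x ∂(gaussianReal 0 1)
      = ∫ x, stdGaussCDF (-x) ∂(gaussianReal 0 1) := by
    conv_lhs => rw [← nu_map_neg]
    rw [integral_map (f := stdGaussCDF) measurable_neg.aemeasurable
      measurable_stdGaussCDF.aestronglyMeasurable]
  have h2 : ∫ x, stdGaussCDF (-x) ∂(gaussianReal 0 1)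
      = ∫ x, (1 - stdGaussCDF x) ∂(gaussianReal 0 1) := by
    simp only [stdGaussCDF_neg]
  have h3 : ∫ x, (1 - stdGaussCDF x) ∂(gaussianReal 0 1)
      = 1 - ∫ x, stdGaussCDF x ∂(gaussianReal 0 1) := by
    rw [integral_sub (integrable_const 1) (integrable_cdf_comp _ (fun x : ℝ => x) measurable_id)]
    simp
  have := h1.trans (h2.trans h3)
  linarith

lemma phi_le_phi_zero (u : ℝ) : phi u ≤ phi 0 := by
  have : |(0:ℝ)| ≤ |u| := by simp
  exact phi_anti this

lemma phi_mul_phi (t x : ℝ) :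
    phi x * phi (t + x) = (2*π)⁻¹ * Real.exp (-t^2/4) * Real.exp (-(x + t/2)^2) := by
  unfold phi gaussianPDFReal
  simp only [NNReal.coe_one]
  rw [mul_mul_mul_comm, ← Real.exp_add]
  have h1 : (Real.sqrt (2*π*1))⁻¹ * (Real.sqrt (2*π*1))⁻¹ = (2*π)⁻¹ := by
    rw [← mul_inv, mul_one, Real.mul_self_sqrt (by positivity)]
  rw [h1, mul_assoc, ← Real.exp_add]
  congr 2
  ring

lemma const_eval : (2*π)⁻¹ * Real.sqrt π = (Real.sqrt (2*π*1))⁻¹ / Real.sqrt 2 := by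
  have hπ : Real.sqrt π * Real.sqrt π = π := Real.mul_self_sqrt Real.pi_pos.le
  have h2 : Real.sqrt 2 * Real.sqrt 2 = 2 := Real.mul_self_sqrt (by norm_num)
  have h2π : Real.sqrt (2*π*1) = Real.sqrt 2 * Real.sqrt π := by
    rw [mul_one, Real.sqrt_mul (by norm_num)]
  rw [h2π]
  have hs2 : (0:ℝ) < Real.sqrt 2 := Real.sqrt_pos.2 (by norm_num)
  have hsπ : (0:ℝ) < Real.sqrt π := Real.sqrt_pos.2 Real.pi_pos
  field_simp
  nlinarith [Real.pi_pos]

lemma exponent_eval (t : ℝ) : -(t / Real.sqrt 2 - 0)^2 / (2*1) = -t^2/4 := by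
  have h2 : Real.sqrt 2 ^ 2 = 2 := Real.sq_sqrt (by norm_num)
  rw [sub_zero, div_pow, h2]
  ring

lemma integral_phi_shift (t : ℝ) :
    ∫ x, phi x * phi (t + x) = phi (t / Real.sqrt 2) / Real.sqrt 2 := by
  simp only [phi_mul_phi]
  rw [MeasureTheory.integral_const_mul]
  have hshift : ∫ x : ℝ, Real.exp (-(x + t/2)^2) = ∫ x : ℝ, Real.exp (-x^2) :=
    integral_add_right_eq_self (fun x : ℝ => Real.exp (-x^2)) (t/2)
  have hg : ∫ x : ℝ, Real.exp (-x^2) = Real.sqrt π := by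
    have := integral_gaussian 1
    simpa using this
  rw [hshift, hg]
  unfold phi gaussianPDFReal
  simp only [NNReal.coe_one]
  rw [exponent_eval]
  rw [show (Real.sqrt (2*π*1))⁻¹ * Real.exp (-t^2/4) / Real.sqrt 2
      = ((Real.sqrt (2*π*1))⁻¹ / Real.sqrt 2) * Real.exp (-t^2/4) by ring, ← const_eval]
  ring

lemma hasDerivAt_F (t : ℝ) :
    HasDerivAt (fun s => ∫ x, stdGaussCDF (s + x) ∂(gaussianReal 0 1))
      (phi (t / Real.sqrt 2) / Real.sqrt 2) t := by
  have key := hasDerivAt_integral_of_dominated_loc_of_deriv_le (μ := gaussianReal 0 1)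
    (F := fun s x => stdGaussCDF (s + x)) (F' := fun s x => phi (s + x))
    (x₀ := t) (bound := fun _ => phi 0) (Metric.ball_mem_nhds t one_pos)
    (Filter.Eventually.of_forall fun s =>
      (measurable_stdGaussCDF.comp (measurable_const_add s)).aestronglyMeasurable)
    (integrable_cdf_comp _ (fun x => t + x) (measurable_const_add t))
    ((continuous_phi.comp (continuous_const.add continuous_id)).measurable).aestronglyMeasurable
    (Filter.Eventually.of_forall fun x s _ => by
      rw [Real.norm_eq_abs, abs_of_nonneg (phi_pos _).le]
      exact phi_le_phi_zero _)
    (integrable_const _)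
    (Filter.Eventually.of_forall fun x s _ => by
      have h := (hasDerivAt_stdGaussCDF (s + x)).comp s
        ((hasDerivAt_id s).add_const x)
      simpa [Function.comp_def] using h)
  have h2 := key.2
  have h3 : ∫ x, phi (t + x) ∂(gaussianReal 0 1) = phi (t / Real.sqrt 2) / Real.sqrt 2 := by
    rw [integral_nu, integral_phi_shift]
  rwa [h3] at h2

lemma hasDerivAt_Psi (t : ℝ) :
    HasDerivAt (fun s => stdGaussCDF (s / Real.sqrt 2))
      (phi (t / Real.sqrt 2) / Real.sqrt 2) t := by
  have h := (hasDerivAt_stdGaussCDF (t / Real.sqrt 2)).comp t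
    ((hasDerivAt_id t).div_const (Real.sqrt 2))
  simpa [div_eq_mul_inv, mul_comm, Function.comp_def] using h

lemma F_eq_Psi (t : ℝ) :
    ∫ x, stdGaussCDF (t + x) ∂(gaussianReal 0 1) = stdGaussCDF (t / Real.sqrt 2) := by
  set g : ℝ → ℝ := fun s =>
    (∫ x, stdGaussCDF (s + x) ∂(gaussianReal 0 1)) - stdGaussCDF (s / Real.sqrt 2) with hg
  have hd : ∀ s, HasDerivAt g 0 s := fun s => by
    have := (hasDerivAt_F s).sub (hasDerivAt_Psi s)
    rw [sub_self] at this; exact this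
  have hconst : g t = g 0 :=
    is_const_of_deriv_eq_zero (fun s => (hd s).differentiableAt) (fun s => (hd s).deriv) t 0
  have hzero : g 0 = 0 := by
    rw [hg]
    simp only [zero_div]
    rw [F_zero]
    have : stdGaussCDF 0 = 1/2 := by
      have := stdGaussCDF_neg 0
      simp at this
      linarith
    rw [this]
    norm_num
  have := hconst.trans hzero
  rw [hg] at this
  linarith [this]

lemma prob_sub_lt {Ω : Type*} [MeasurableSpace Ω] (μ : Measure Ω) [IsProbabilityMeasure μ]
    {X Y : Ω → ℝ} (hX : Measurable X) (hY : Measurable Y)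
    (hXm : Measure.map X μ = gaussianReal 0 1) (hYm : Measure.map Y μ = gaussianReal 0 1)
    (hind : IndepFun X Y μ) (t : ℝ) :
    μ {ω | X ω - Y ω < t} = ENNReal.ofReal (stdGaussCDF (t / Real.sqrt 2)) := by
  have hmap : Measure.map (fun ω => (Y ω, X ω)) μ
      = (gaussianReal 0 1).prod (gaussianReal 0 1) := by
    rw [(indepFun_iff_map_prod_eq_prod_map_map hY.aemeasurable hX.aemeasurable).1 hind.symm,
      hYm, hXm]
  have hset : {ω | X ω - Y ω < t} = (fun ω => (Y ω, X ω)) ⁻¹' {p : ℝ × ℝ | p.2 < t + p.1} := by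
    ext ω; simp [Set.mem_setOf_eq]; constructor <;> intro <;> linarith
  have hms : MeasurableSet {p : ℝ × ℝ | p.2 < t + p.1} :=
    measurableSet_lt measurable_snd (measurable_const.add measurable_fst)
  rw [hset, ← Measure.map_apply (hY.prodMk hX) hms, hmap, Measure.prod_apply hms]
  have hslice : ∀ y : ℝ, (Prod.mk y ⁻¹' {p : ℝ × ℝ | p.2 < t + p.1}) = Set.Iio (t + y) := by
    intro y; ext x; simp [Set.mem_setOf_eq]
  have h1 : ∀ y : ℝ, gaussianReal 0 1 (Set.Iio (t + y))
      = ENNReal.ofReal (stdGaussCDF (t + y)) := by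
    intro y
    rw [measure_congr (Iio_ae_eq_Iic' (nu_noatoms (t + y)))]
    exact (ofReal_cdf _ _).symm
  simp_rw [hslice, h1]
  rw [← ofReal_integral_eq_lintegral_ofReal
    (integrable_cdf_comp _ (fun y => t + y) (measurable_const_add t))
    (Filter.Eventually.of_forall fun y => stdGaussCDF_nonneg _), F_eq_Psi]


lemma integrable_bdd {Ω : Type u} [MeasurableSpace Ω] (μ : Measure Ω) [IsProbabilityMeasure μ]
    {g : Ω → ℝ} (hm : Measurable g) {c : ℝ} (hb : ∀ ω, |g ω| ≤ c) : Integrable g μ :=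
  Integrable.mono' (integrable_const c) hm.aestronglyMeasurable (Filter.Eventually.of_forall hb)

lemma clamp_abs {x u : ℝ} (h1 : -1 ≤ x) (h2 : x ≤ 1) :
    |max (-1) (min 1 u) - x| ≤ |u - x| := by
  rcases le_total u (-1) with h | h
  · rw [min_eq_right (by linarith), max_eq_left h,
      abs_of_nonpos (by linarith), abs_of_nonpos (by linarith)]
    linarith
  rcases le_total 1 u with h' | h'
  · rw [min_eq_left h', max_eq_right (by norm_num : (-1:ℝ) ≤ 1),
      abs_of_nonneg (by linarith), abs_of_nonneg (by linarith)]
    linarith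
  · rw [min_eq_right h', max_eq_right h]

lemma sqrt8_pos : (0:ℝ) < Real.sqrt 8 := Real.sqrt_pos.2 (by norm_num)
lemma sqrt8_sq : Real.sqrt 8 ^ 2 = 8 := Real.sq_sqrt (by norm_num)
lemma sqrt8_eq : Real.sqrt 8 = 4 / Real.sqrt 2 := by
  rw [show (8:ℝ) = (4 / Real.sqrt 2)^2 by
    rw [div_pow, Real.sq_sqrt (by norm_num : (0:ℝ) ≤ 2)]; norm_num]
  exact Real.sqrt_sq (by positivity)

/-- Simple regret of the COPS1 algorithm on the one-dimensional noisy sphere: there is a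
universal constant `C > 0` such that for every `x* ∈ [−1,1]` and budget `N = 2K`, the
estimator `x̂ = max(−1, min(1, h(f)/√8))` built from the empirical comparison frequency
`f = (1/K²)·Σ_{i,j} 1{(1−x*)² + G_i < (−1−x*)² + G'_j}` (with `2K` independent standard
Gaussian noise variables) satisfies `E[(x̂ − x*)²] ≤ C/N`. -/
theorem cops1_simple_regret :
    ∃ C : ℝ, 0 < C ∧
      ∀ (Ω : Type u) [MeasurableSpace Ω] (μ : Measure Ω) [IsProbabilityMeasure μ]
        (xstar : ℝ), xstar ∈ Set.Icc (-1 : ℝ) 1 →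
      ∀ (K : ℕ), 1 ≤ K →
      ∀ (G G' : Fin K → Ω → ℝ),
        (∀ i, Measurable (G i)) → (∀ j, Measurable (G' j)) →
        (∀ i, Measure.map (G i) μ = gaussianReal 0 1) →
        (∀ j, Measure.map (G' j) μ = gaussianReal 0 1) →
        iIndepFun (Sum.elim G G') μ →
      ∀ (h : ℝ → ℝ), IsClampedGaussInv (Real.sqrt 8) h →
        ∫ ω, (max (-1) (min 1
            (h ((1 / (K : ℝ) ^ 2) * ∑ i : Fin K, ∑ j : Fin K,
                if (1 - xstar) ^ 2 + G i ω < (-1 - xstar) ^ 2 + G' j ω then (1 : ℝ) else 0)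
              / Real.sqrt 8)) - xstar) ^ 2 ∂μ
          ≤ C / (2 * K) := by
  classical
  set L : ℝ := (phi (Real.sqrt 8))⁻¹ with hL
  have hLpos : 0 < L := inv_pos.2 (phi_pos _)
  refine ⟨L^2 / 2, by positivity, ?_⟩
  intro Ω _ μ _ xstar hx K hK G G' hGm hG'm hGmap hG'map hindep h hinv
  set p : ℝ := stdGaussCDF (Real.sqrt 8 * xstar) with hp
  set X : Fin K → Fin K → Ω → ℝ := fun i j ω =>
    if (1 - xstar) ^ 2 + G i ω < (-1 - xstar) ^ 2 + G' j ω then (1 : ℝ) else 0 with hX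
  set Y : Fin K → Fin K → Ω → ℝ := fun i j ω => X i j ω - p with hY
  have hKpos : (0:ℝ) < K := by exact_mod_cast hK
  -- measurability
  have hsetm : ∀ i j, MeasurableSet {ω | (1 - xstar) ^ 2 + G i ω < (-1 - xstar) ^ 2 + G' j ω} :=
    fun i j => measurableSet_lt (measurable_const.add (hGm i)) (measurable_const.add (hG'm j))
  have hXm : ∀ i j, Measurable (X i j) := fun i j =>
    Measurable.ite (hsetm i j) measurable_const measurable_const
  have hYm : ∀ i j, Measurable (Y i j) := fun i j => (hXm i j).sub measurable_const
  have hp01 : 0 ≤ p ∧ p ≤ 1 := ⟨stdGaussCDF_nonneg _, stdGaussCDF_le_one _⟩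
  have hYbdd : ∀ i j ω, |Y i j ω| ≤ 1 := by
    intro i j ω
    simp only [hY, hX]
    split <;> rw [abs_le] <;> constructor <;> linarith [hp01.1, hp01.2]
  have hXbdd : ∀ i j ω, |X i j ω| ≤ 1 := by
    intro i j ω; simp only [hX]; split <;> simp
  have hXint : ∀ i j, Integrable (X i j) μ := fun i j => integrable_bdd μ (hXm i j) (hXbdd i j)
  have hYint : ∀ i j, Integrable (Y i j) μ := fun i j => integrable_bdd μ (hYm i j) (hYbdd i j)
  -- mean of X
  have hallm : ∀ a : Fin K ⊕ Fin K, Measurable (Sum.elim G G' a) := by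
    intro a; cases a with
    | inl i => exact hGm i
    | inr j => exact hG'm j
  have hEX : ∀ i j, ∫ ω, X i j ω ∂μ = p := by
    intro i j
    have hiff : ∀ ω, ((1 - xstar) ^ 2 + G i ω < (-1 - xstar) ^ 2 + G' j ω)
        ↔ (G i ω - G' j ω < 4 * xstar) := by
      intro ω; constructor <;> intro hh <;> nlinarith
    have hind : IndepFun (G i) (G' j) μ :=
      hindep.indepFun (i := Sum.inl i) (j := Sum.inr j) (by simp)
    have hprob := prob_sub_lt μ (hGm i) (hG'm j) (hGmap i) (hG'map j) hind (4 * xstar)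
    have hsets : {ω | G i ω - G' j ω < 4 * xstar}
        = {ω | (1 - xstar) ^ 2 + G i ω < (-1 - xstar) ^ 2 + G' j ω} := by
      ext ω; exact (hiff ω).symm
    have harg : (4 * xstar) / Real.sqrt 2 = Real.sqrt 8 * xstar := by
      rw [sqrt8_eq]; field_simp
    rw [hsets, harg] at hprob
    have : (fun ω => X i j ω)
        = Set.indicator {ω | (1 - xstar) ^ 2 + G i ω < (-1 - xstar) ^ 2 + G' j ω}
          (fun _ => (1:ℝ)) := by
      ext ω; simp only [hX, Set.indicator_apply, Set.mem_setOf_eq]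
    rw [this, integral_indicator_const _ (hsetm i j), measureReal_def, hprob,
      ENNReal.toReal_ofReal (stdGaussCDF_nonneg _)]
    simp [hp]
  have hEY : ∀ i j, ∫ ω, Y i j ω ∂μ = 0 := by
    intro i j
    simp only [hY]
    rw [integral_sub (hXint i j) (integrable_const p), hEX i j, integral_const]
    simp
  -- products
  have hYYint : ∀ i j k l, Integrable (fun ω => Y i j ω * Y k l ω) μ := by
    intro i j k l
    refine integrable_bdd μ ((hYm i j).mul (hYm k l)) (c := 1) fun ω => ?_
    rw [abs_mul]
    exact mul_le_one₀ (hYbdd i j ω) (abs_nonneg _) (hYbdd k l ω)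
  have hzero : ∀ i j k l, i ≠ k → j ≠ l → ∫ ω, Y i j ω * Y k l ω ∂μ = 0 := by
    intro i j k l hik hjl
    set ψ : ℝ × ℝ → ℝ := fun q =>
      (if (1 - xstar) ^ 2 + q.1 < (-1 - xstar) ^ 2 + q.2 then (1:ℝ) else 0) - p with hψ
    have hψm : Measurable ψ :=
      (Measurable.ite (measurableSet_lt (measurable_const.add measurable_fst)
        (measurable_const.add measurable_snd)) measurable_const measurable_const).sub
        measurable_const
    have hpair := hindep.indepFun_prodMk_prodMk hallm
      (Sum.inl i) (Sum.inr j) (Sum.inl k) (Sum.inr l)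
      (by simp [hik]) (by simp) (by simp) (by simp [hjl])
    have hindY : IndepFun (Y i j) (Y k l) μ := by
      have := hpair.comp hψm hψm
      exact this
    have := hindY.integral_mul_eq_mul_integral (hYm i j).aestronglyMeasurable (hYm k l).aestronglyMeasurable
    have heq : ∫ ω, Y i j ω * Y k l ω ∂μ = ∫ ω, (Y i j * Y k l) ω ∂μ := rfl
    rw [heq, this, hEY i j, hEY k l, mul_zero]
  have hbound1 : ∀ i j k l, ∫ ω, Y i j ω * Y k l ω ∂μ ≤ 1 := by
    intro i j k l
    have : ∀ ω, Y i j ω * Y k l ω ≤ 1 := fun ω => by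
      calc Y i j ω * Y k l ω ≤ |Y i j ω * Y k l ω| := le_abs_self _
        _ ≤ 1 := by rw [abs_mul]; exact mul_le_one₀ (hYbdd i j ω) (abs_nonneg _) (hYbdd k l ω)
    calc ∫ ω, Y i j ω * Y k l ω ∂μ ≤ ∫ _ω, (1:ℝ) ∂μ :=
          integral_mono (hYYint i j k l) (integrable_const 1) this
      _ = 1 := by simp
  -- sum
  set S : Ω → ℝ := fun ω => ∑ q : Fin K × Fin K, Y q.1 q.2 ω with hS
  have hSm : Measurable S := Finset.measurable_sum _ fun q _ => hYm q.1 q.2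
  have hSbdd : ∀ ω, |S ω| ≤ (K:ℝ)^2 := by
    intro ω
    calc |S ω| ≤ ∑ q : Fin K × Fin K, |Y q.1 q.2 ω| := Finset.abs_sum_le_sum_abs _ _
      _ ≤ ∑ _q : Fin K × Fin K, (1:ℝ) := Finset.sum_le_sum fun q _ => hYbdd q.1 q.2 ω
      _ = (K:ℝ)^2 := by simp [Finset.card_univ]; ring
  have hSsq : ∫ ω, (S ω)^2 ∂μ ≤ 2 * (K:ℝ)^3 := by
    have hexp : ∀ ω, (S ω)^2 = ∑ q : Fin K × Fin K, ∑ r : Fin K × Fin K,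
        Y q.1 q.2 ω * Y r.1 r.2 ω := by
      intro ω; rw [sq, hS, Finset.sum_mul_sum]
    have hint : ∫ ω, (S ω)^2 ∂μ = ∑ q : Fin K × Fin K, ∑ r : Fin K × Fin K,
        ∫ ω, Y q.1 q.2 ω * Y r.1 r.2 ω ∂μ := by
      simp_rw [hexp]
      rw [integral_finset_sum _ fun q _ => integrable_finset_sum _ fun r _ => hYYint _ _ _ _]
      exact Finset.sum_congr rfl fun q _ =>
        integral_finset_sum _ fun r _ => hYYint _ _ _ _
    rw [hint]
    have hterm : ∀ q r : Fin K × Fin K,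
        ∫ ω, Y q.1 q.2 ω * Y r.1 r.2 ω ∂μ
          ≤ (if q.1 = r.1 then (1:ℝ) else 0) + (if q.2 = r.2 then (1:ℝ) else 0) := by
      intro q r
      by_cases h1 : q.1 = r.1
      · have hb := hbound1 q.1 q.2 r.1 r.2
        have h2 : (0:ℝ) ≤ if q.2 = r.2 then (1:ℝ) else 0 := by positivity
        rw [if_pos h1]
        linarith
      by_cases h2 : q.2 = r.2
      · have hb := hbound1 q.1 q.2 r.1 r.2
        rw [if_neg h1, if_pos h2]
        linarith
      · rw [if_neg h1, if_neg h2, hzero q.1 q.2 r.1 r.2 h1 h2]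
        norm_num
    calc ∑ q : Fin K × Fin K, ∑ r : Fin K × Fin K, ∫ ω, Y q.1 q.2 ω * Y r.1 r.2 ω ∂μ
        ≤ ∑ q : Fin K × Fin K, ∑ r : Fin K × Fin K,
          ((if q.1 = r.1 then (1:ℝ) else 0) + (if q.2 = r.2 then (1:ℝ) else 0)) :=
          Finset.sum_le_sum fun q _ => Finset.sum_le_sum fun r _ => hterm q r
      _ = 2 * (K:ℝ)^3 := by
          have e1 : ∀ q : Fin K × Fin K,
              ∑ r : Fin K × Fin K, (if q.1 = r.1 then (1:ℝ) else 0) = (K:ℝ) := by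
            intro q
            rw [Fintype.sum_prod_type]
            simp [apply_ite Finset.card, Finset.sum_ite_eq, Finset.card_univ]
          have e2 : ∀ q : Fin K × Fin K,
              ∑ r : Fin K × Fin K, (if q.2 = r.2 then (1:ℝ) else 0) = (K:ℝ) := by
            intro q
            rw [Fintype.sum_prod_type]
            simp [apply_ite Finset.card, Finset.sum_ite_eq, Finset.card_univ]
          simp_rw [Finset.sum_add_distrib, e1, e2, Finset.sum_const, Finset.card_univ]
          simp [Fintype.card_prod]
          ring
  -- relation between f and S
  have hfrel : ∀ ω : Ω, (1 / (K:ℝ)^2) * (∑ i : Fin K, ∑ j : Fin K, X i j ω) - p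
      = (1/(K:ℝ)^2) * S ω := by
    intro ω
    simp only [hS]
    rw [Fintype.sum_prod_type]
    simp only [hY]
    have e : ∑ i : Fin K, ∑ j : Fin K, (X i j ω - p)
        = (∑ i : Fin K, ∑ j : Fin K, X i j ω) - (K:ℝ)^2 * p := by
      simp [Finset.sum_sub_distrib, Finset.sum_const, Finset.card_univ]
      ring
    rw [e]
    field_simp
  have hs8 : Real.sqrt 8 * xstar ∈ Set.Icc (-Real.sqrt 8) (Real.sqrt 8) :=
    ⟨by nlinarith [sqrt8_pos, hx.1, hx.2], by nlinarith [sqrt8_pos, hx.1, hx.2]⟩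
  -- pointwise bound
  have hpt : ∀ ω : Ω, (max (-1) (min 1
        (h ((1 / (K : ℝ) ^ 2) * ∑ i : Fin K, ∑ j : Fin K, X i j ω)
          / Real.sqrt 8)) - xstar) ^ 2
      ≤ (L / Real.sqrt 8)^2 * ((1/(K:ℝ)^2) * S ω)^2 := by
    intro ω
    set fv : ℝ := (1 / (K:ℝ)^2) * ∑ i : Fin K, ∑ j : Fin K, X i j ω with hfv
    have h1 : |max (-1) (min 1 (h fv / Real.sqrt 8)) - xstar| ≤ |h fv / Real.sqrt 8 - xstar| :=
      clamp_abs hx.1 hx.2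
    have h2 : h fv / Real.sqrt 8 - xstar = (h fv - Real.sqrt 8 * xstar) / Real.sqrt 8 := by
      field_simp
    have h3 : |h fv - Real.sqrt 8 * xstar| ≤ L * |fv - p| :=
      clamped_inv_lip sqrt8_pos hinv hs8 fv
    have hcomb : |max (-1) (min 1 (h fv / Real.sqrt 8)) - xstar|
        ≤ L / Real.sqrt 8 * |fv - p| := by
      calc |max (-1) (min 1 (h fv / Real.sqrt 8)) - xstar|
          ≤ |h fv / Real.sqrt 8 - xstar| := h1
        _ = |h fv - Real.sqrt 8 * xstar| / Real.sqrt 8 := by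
            rw [h2, abs_div, abs_of_pos sqrt8_pos]
        _ ≤ (L * |fv - p|) / Real.sqrt 8 := by gcongr
        _ = L / Real.sqrt 8 * |fv - p| := by ring
    calc (max (-1) (min 1 (h fv / Real.sqrt 8)) - xstar)^2
        = |max (-1) (min 1 (h fv / Real.sqrt 8)) - xstar|^2 := (sq_abs _).symm
      _ ≤ (L / Real.sqrt 8 * |fv - p|)^2 := by
          apply pow_le_pow_left₀ (abs_nonneg _) hcomb
      _ = (L / Real.sqrt 8)^2 * (fv - p)^2 := by rw [mul_pow, sq_abs]
      _ = (L / Real.sqrt 8)^2 * ((1/(K:ℝ)^2) * S ω)^2 := by rw [← hfrel ω]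
  -- integrability of the dominating function
  have hdom : Integrable (fun ω => (L / Real.sqrt 8)^2 * ((1/(K:ℝ)^2) * S ω)^2) μ := by
    refine integrable_bdd μ ?_ (c := (L / Real.sqrt 8)^2) fun ω => ?_
    · exact ((hSm.const_mul _).pow_const 2).const_mul _
    · have hb : ((1/(K:ℝ)^2) * S ω)^2 ≤ 1 := by
        rw [← sq_abs]
        refine pow_le_one₀ (abs_nonneg _) ?_
        rw [abs_mul, abs_of_pos (by positivity : (0:ℝ) < 1/(K:ℝ)^2)]
        calc (1/(K:ℝ)^2) * |S ω| ≤ (1/(K:ℝ)^2) * (K:ℝ)^2 := by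
              exact mul_le_mul_of_nonneg_left (hSbdd ω) (by positivity)
          _ = 1 := by field_simp
      rw [abs_of_nonneg (by positivity)]
      nlinarith [sq_nonneg (L / Real.sqrt 8)]
  -- final chain
  calc ∫ ω, (max (-1) (min 1
        (h ((1 / (K : ℝ) ^ 2) * ∑ i : Fin K, ∑ j : Fin K, X i j ω)
          / Real.sqrt 8)) - xstar) ^ 2 ∂μ
      ≤ ∫ ω, (L / Real.sqrt 8)^2 * ((1/(K:ℝ)^2) * S ω)^2 ∂μ :=
        integral_mono_of_nonneg (Filter.Eventually.of_forall fun ω => sq_nonneg _)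
          hdom (Filter.Eventually.of_forall hpt)
    _ = (L / Real.sqrt 8)^2 * (1/(K:ℝ)^2)^2 * ∫ ω, (S ω)^2 ∂μ := by
        simp_rw [mul_pow, ← mul_assoc]
        rw [MeasureTheory.integral_const_mul]
    _ ≤ (L / Real.sqrt 8)^2 * (1/(K:ℝ)^2)^2 * (2 * (K:ℝ)^3) := by
        exact mul_le_mul_of_nonneg_left hSsq (by positivity)
    _ = L^2/2 / (2 * (K:ℕ)) := by
        rw [div_pow, sqrt8_sq]
        field_simp
        ring
end
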